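/- The radial function f₀(r) = (r²−1)/(r²+1), viewed as the radial function z ↦ (|z|²−1)/(|z|²+1) on ℝ², satisfies Δf₀ + (8/(1+r²)²) f₀ = 0, and for a > 0 the rescaled function z ↦ f₀(a|z|) satisfies −Δ(f₀(a|z|)) = 8a²(a²|z|²−1)/(1+a²|z|²)³. -/

import Mathlib

open Real

/-- The standard Laplacian on `ℝ²`: sum of the two pure second partial derivatives. -/
noncomputable def lap (f : ℝ × ℝ → ℝ) (p : ℝ × ℝ) : ℝ :=
  deriv (deriv (fun s => f (s, p.2))) p.1 + deriv (deriv (fun s => f (p.1, s))) p.2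

/-- The radial function `f₀(r) = (r²−1)/(r²+1)` viewed as `z ↦ (|z|²−1)/(|z|²+1)` on `ℝ²`. -/
noncomputable def f0 (z : ℝ × ℝ) : ℝ := ((z.1 ^ 2 + z.2 ^ 2) - 1) / ((z.1 ^ 2 + z.2 ^ 2) + 1)

/-- The rescaled radial function `z ↦ f₀(a|z|)`. -/
noncomputable def f0a (a : ℝ) (z : ℝ × ℝ) : ℝ :=
  (a ^ 2 * (z.1 ^ 2 + z.2 ^ 2) - 1) / (a ^ 2 * (z.1 ^ 2 + z.2 ^ 2) + 1)

lemma denom_pos (a c x : ℝ) (hc : 0 ≤ c) : 0 < a ^ 2 * (x ^ 2 + c) + 1 := by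
  nlinarith [sq_nonneg a, sq_nonneg x]

lemma hd1 (a c x : ℝ) (hc : 0 ≤ c) :
    HasDerivAt (fun s : ℝ => (a ^ 2 * (s ^ 2 + c) - 1) / (a ^ 2 * (s ^ 2 + c) + 1))
      (4 * a ^ 2 * x / (a ^ 2 * (x ^ 2 + c) + 1) ^ 2) x := by
  have hD : (a ^ 2 * (x ^ 2 + c) + 1) ≠ 0 := (denom_pos a c x hc).ne'
  have hnum : HasDerivAt (fun s : ℝ => a ^ 2 * (s ^ 2 + c) - 1) (a ^ 2 * (2 * x)) x := by
    simpa using (((hasDerivAt_pow 2 x).add_const c).const_mul (a ^ 2)).sub_const 1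
  have hden : HasDerivAt (fun s : ℝ => a ^ 2 * (s ^ 2 + c) + 1) (a ^ 2 * (2 * x)) x := by
    simpa using (((hasDerivAt_pow 2 x).add_const c).const_mul (a ^ 2)).add_const 1
  have := hnum.div hden hD
  refine this.congr_deriv ?_
  field_simp
  ring

lemma hd2 (a c x : ℝ) (hc : 0 ≤ c) :
    HasDerivAt (fun s : ℝ => 4 * a ^ 2 * s / (a ^ 2 * (s ^ 2 + c) + 1) ^ 2)
      ((4 * a ^ 2 * (a ^ 2 * (x ^ 2 + c) + 1) - 16 * a ^ 4 * x ^ 2)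
        / (a ^ 2 * (x ^ 2 + c) + 1) ^ 3) x := by
  have hDpos := denom_pos a c x hc
  have hD : (a ^ 2 * (x ^ 2 + c) + 1) ≠ 0 := hDpos.ne'
  have hD2 : ((a ^ 2 * (x ^ 2 + c) + 1) ^ 2) ≠ 0 := pow_ne_zero _ hD
  have hnum : HasDerivAt (fun s : ℝ => 4 * a ^ 2 * s) (4 * a ^ 2) x := by
    simpa using (hasDerivAt_id x).const_mul (4 * a ^ 2)
  have hden : HasDerivAt (fun s : ℝ => (a ^ 2 * (s ^ 2 + c) + 1) ^ 2)
      (2 * (a ^ 2 * (x ^ 2 + c) + 1) * (a ^ 2 * (2 * x))) x := by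
    have hbase : HasDerivAt (fun s : ℝ => a ^ 2 * (s ^ 2 + c) + 1) (a ^ 2 * (2 * x)) x := by
      simpa using (((hasDerivAt_pow 2 x).add_const c).const_mul (a ^ 2)).add_const 1
    refine (hbase.pow 2).congr_deriv ?_
    norm_num
  have := hnum.div hden hD2
  refine this.congr_deriv ?_
  field_simp
  ring

lemma second_deriv (a c x : ℝ) (hc : 0 ≤ c) :
    deriv (deriv (fun s : ℝ => (a ^ 2 * (s ^ 2 + c) - 1) / (a ^ 2 * (s ^ 2 + c) + 1))) x
      = (4 * a ^ 2 * (a ^ 2 * (x ^ 2 + c) + 1) - 16 * a ^ 4 * x ^ 2)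
        / (a ^ 2 * (x ^ 2 + c) + 1) ^ 3 := by
  have h1 : deriv (fun s : ℝ => (a ^ 2 * (s ^ 2 + c) - 1) / (a ^ 2 * (s ^ 2 + c) + 1))
      = fun x => 4 * a ^ 2 * x / (a ^ 2 * (x ^ 2 + c) + 1) ^ 2 := by
    funext y; exact (hd1 a c y hc).deriv
  rw [h1]
  exact (hd2 a c x hc).deriv

lemma lap_f0a (a : ℝ) (z : ℝ × ℝ) :
    lap (f0a a) z = 8 * a ^ 2 * (1 - a ^ 2 * (z.1 ^ 2 + z.2 ^ 2))
      / (a ^ 2 * (z.1 ^ 2 + z.2 ^ 2) + 1) ^ 3 := by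
  have hDpos := denom_pos a (z.2 ^ 2) z.1 (sq_nonneg _)
  have hDpos' := denom_pos a (z.1 ^ 2) z.2 (sq_nonneg _)
  have e1 : (fun s : ℝ => f0a a (s, z.2))
      = fun s : ℝ => (a ^ 2 * (s ^ 2 + z.2 ^ 2) - 1) / (a ^ 2 * (s ^ 2 + z.2 ^ 2) + 1) := rfl
  have e2 : (fun s : ℝ => f0a a (z.1, s))
      = fun s : ℝ => (a ^ 2 * (s ^ 2 + z.1 ^ 2) - 1) / (a ^ 2 * (s ^ 2 + z.1 ^ 2) + 1) := by
    funext s; simp only [f0a]; ring_nf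
  have h1 := second_deriv a (z.2 ^ 2) z.1 (sq_nonneg _)
  have h2 := second_deriv a (z.1 ^ 2) z.2 (sq_nonneg _)
  simp only [lap, e1, e2, h1, h2]
  have hD : (a ^ 2 * (z.1 ^ 2 + z.2 ^ 2) + 1) ≠ 0 := by nlinarith
  have hD2 : (a ^ 2 * (z.2 ^ 2 + z.1 ^ 2) + 1) ≠ 0 := by nlinarith
  field_simp
  ring

/-- `f₀` satisfies `Δf₀ + (8/(1+r²)²) f₀ = 0`, and for `a > 0` the rescaled function `f₀(a|z|)`
satisfies `−Δ(f₀(a|z|)) = 8a²(a²|z|²−1)/(1+a²|z|²)³`. -/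
theorem radial_comparison_function (z : ℝ × ℝ) :
    (lap f0 z + 8 / (1 + (z.1 ^ 2 + z.2 ^ 2)) ^ 2 * f0 z = 0) ∧
    ∀ a : ℝ, 0 < a →
      -lap (f0a a) z =
        8 * a ^ 2 * (a ^ 2 * (z.1 ^ 2 + z.2 ^ 2) - 1) / (1 + a ^ 2 * (z.1 ^ 2 + z.2 ^ 2)) ^ 3 := by
  have hf : f0 = f0a 1 := by
    funext w; simp [f0, f0a]
  have hr : (0:ℝ) ≤ z.1 ^ 2 + z.2 ^ 2 := by positivity
  constructor
  · rw [hf, lap_f0a]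
    have hD : (1 : ℝ) ^ 2 * (z.1 ^ 2 + z.2 ^ 2) + 1 ≠ 0 := by nlinarith
    have hD' : (1 : ℝ) + (z.1 ^ 2 + z.2 ^ 2) ≠ 0 := by nlinarith
    simp only [f0a, one_pow, one_mul]
    field_simp
    ring
  · intro a ha
    rw [lap_f0a]
    have hD : a ^ 2 * (z.1 ^ 2 + z.2 ^ 2) + 1 ≠ 0 := by nlinarith [sq_nonneg a]
    have hD' : (1 : ℝ) + a ^ 2 * (z.1 ^ 2 + z.2 ^ 2) ≠ 0 := by nlinarith [sq_nonneg a]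
    field_simp
    ring
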